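/- Let {A_i} be a finite family of Hermitian n×n complex matrices such that any two distinct members have mutually orthogonal support (i.e. A_i A_j = 0 for i ≠ j), and let {B_i} be Hermitian m×m complex matrices. Then |∑_i A_i ⊗ B_i| = ∑_i |A_i| ⊗ |B_i|, where ⊗ is the Kronecker product and |M| := √(M† M) is the matrix absolute value. -/

import Mathlib

open Matrix Kronecker
open scoped ComplexOrder

/-- The matrix absolute value `|M| := √(Mᴴ M)`, the positive semidefinite
square root of `Mᴴ M`. -/
noncomputable def matAbs {n : Type*} [Fintype n] [DecidableEq n]
    (M : Matrix n n ℂ) : Matrix n n ℂ :=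
  (Matrix.posSemidef_conjTranspose_mul_self M).1.eigenvectorUnitary.1 *
    diagonal ((↑) ∘ (√·) ∘ (Matrix.posSemidef_conjTranspose_mul_self M).1.eigenvalues) *
    (star (Matrix.posSemidef_conjTranspose_mul_self M).1.eigenvectorUnitary : Matrix n n ℂ)

open scoped MatrixOrder

lemma matAbs_eq_sqrt {n : Type*} [Fintype n] [DecidableEq n]
    (M : Matrix n n ℂ) : matAbs M = CFC.sqrt (Mᴴ * M) := by
  have h := Matrix.posSemidef_conjTranspose_mul_self M
  rw [CFC.sqrt_eq_real_sqrt _ h.nonneg, cfcₙ_eq_cfc, h.1.cfc_eq]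
  rfl

lemma matAbs_posSemidef {n : Type*} [Fintype n] [DecidableEq n]
    (M : Matrix n n ℂ) : (matAbs M).PosSemidef :=
by rw [matAbs_eq_sqrt]; exact (CFC.sqrt_nonneg _).posSemidef

lemma matAbs_sq {n : Type*} [Fintype n] [DecidableEq n]
    (M : Matrix n n ℂ) : matAbs M * matAbs M = Mᴴ * M :=
by rw [matAbs_eq_sqrt]; exact CFC.sqrt_mul_sqrt_self _ (Matrix.posSemidef_conjTranspose_mul_self M).nonneg

lemma kron_conjTranspose {n m : Type*} (A : Matrix n n ℂ) (B : Matrix m m ℂ) :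
    (A ⊗ₖ B)ᴴ = Aᴴ ⊗ₖ Bᴴ := by
  ext ⟨i, k⟩ ⟨j, l⟩
  simp [Matrix.conjTranspose_apply, Matrix.kroneckerMap_apply, mul_comm]

lemma kron_posSemidef {n m : Type*} [Fintype n] [DecidableEq n]
    [Fintype m] [DecidableEq m] {A : Matrix n n ℂ} {B : Matrix m m ℂ}
    (hA : A.PosSemidef) (hB : B.PosSemidef) : (A ⊗ₖ B).PosSemidef := by
  have : A ⊗ₖ B = (CFC.sqrt A ⊗ₖ CFC.sqrt B)ᴴ * (CFC.sqrt A ⊗ₖ CFC.sqrt B) := by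
    rw [kron_conjTranspose, (CFC.sqrt_nonneg A).posSemidef.1, (CFC.sqrt_nonneg B).posSemidef.1,
      ← Matrix.mul_kronecker_mul, CFC.sqrt_mul_sqrt_self A hA.nonneg,
      CFC.sqrt_mul_sqrt_self B hB.nonneg]
  rw [this]
  exact Matrix.posSemidef_conjTranspose_mul_self _

/-- If `A * B = 0` for Hermitian `A`, `B`, then `|A| * |B| = 0`. -/
lemma matAbs_mul_matAbs_eq_zero {n : Type*} [Fintype n] [DecidableEq n]
    {A B : Matrix n n ℂ} (hA : A.IsHermitian) (hB : B.IsHermitian)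
    (hAB : A * B = 0) : matAbs A * matAbs B = 0 := by
  set P := matAbs A with hP
  set Q := matAbs B with hQ
  have hPh : Pᴴ = P := (matAbs_posSemidef A).1
  have hQh : Qᴴ = Q := (matAbs_posSemidef B).1
  have hP2 : P * P = A * A := by rw [hP, matAbs_sq, hA.eq]
  have hQ2 : Q * Q = B * B := by rw [hQ, matAbs_sq, hB.eq]
  have hkey : (P * P) * (Q * Q) = 0 := by
    rw [hP2, hQ2]
    calc A * A * (B * B) = A * (A * B) * B := by noncomm_ring
    _ = 0 := by rw [hAB]; simp
  have h1 : (P * Q)ᴴ * (P * Q) = Q * (P * P) * Q := by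
    rw [Matrix.conjTranspose_mul, hPh, hQh]; noncomm_ring
  have h2 : ((P * Q)ᴴ * (P * Q))ᴴ * ((P * Q)ᴴ * (P * Q)) = 0 := by
    have : ((P * Q)ᴴ * (P * Q))ᴴ = (P * Q)ᴴ * (P * Q) := by
      simp [Matrix.conjTranspose_mul, Matrix.mul_assoc]
    rw [this, h1]
    calc Q * (P * P) * Q * (Q * (P * P) * Q)
        = Q * ((P * P) * (Q * Q)) * (P * P) * Q := by noncomm_ring
    _ = 0 := by rw [hkey]; simp
  have h3 : (P * Q)ᴴ * (P * Q) = 0 :=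
    Matrix.conjTranspose_mul_self_eq_zero.mp h2
  exact Matrix.conjTranspose_mul_self_eq_zero.mp h3

/-- For a finite family of Hermitian matrices `A i` with pairwise orthogonal
supports (`A i * A j = 0` for `i ≠ j`) and Hermitian matrices `B i`, the
absolute value of `∑ i, A i ⊗ B i` is `∑ i, |A i| ⊗ |B i|`. -/
theorem abs_sum_kronecker_of_orthogonal_supports
    {ι n m : Type*} [Fintype ι] [Fintype n] [DecidableEq n]
    [Fintype m] [DecidableEq m]
    (A : ι → Matrix n n ℂ) (B : ι → Matrix m m ℂ)
    (hA : ∀ i, (A i).IsHermitian) (hB : ∀ i, (B i).IsHermitian)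
    (horth : ∀ i j, i ≠ j → A i * A j = 0) :
    matAbs (∑ i, (A i) ⊗ₖ (B i)) = ∑ i, (matAbs (A i)) ⊗ₖ (matAbs (B i)) := by
  set M := ∑ i, (A i) ⊗ₖ (B i) with hM
  set S := ∑ i, (matAbs (A i)) ⊗ₖ (matAbs (B i)) with hS
  have hSpsd : S.PosSemidef := by
    rw [hS]
    refine Finset.sum_induction _ _ (fun a b ha hb => ha.add hb) Matrix.PosSemidef.zero ?_
    intro i _
    exact kron_posSemidef (matAbs_posSemidef (A i)) (matAbs_posSemidef (B i))
  have hSsq : S ^ 2 = Mᴴ * M := by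
    have hMH : Mᴴ = M := by
      rw [hM, Matrix.conjTranspose_sum]
      exact Finset.sum_congr rfl fun i _ => by
        rw [kron_conjTranspose, (hA i).eq, (hB i).eq]
    rw [hMH, sq, hS, hM, Finset.sum_mul_sum, Finset.sum_mul_sum]
    refine Finset.sum_congr rfl fun i _ => ?_
    rw [Finset.sum_eq_single i, Finset.sum_eq_single i]
    · rw [← Matrix.mul_kronecker_mul, ← Matrix.mul_kronecker_mul,
        matAbs_sq, matAbs_sq, (hA i).eq, (hB i).eq]
    · intro j _ hji
      rw [← Matrix.mul_kronecker_mul, horth i j (Ne.symm hji)]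
      simp
    · intro h; exact absurd (Finset.mem_univ i) h
    · intro j _ hji
      rw [← Matrix.mul_kronecker_mul,
        matAbs_mul_matAbs_eq_zero (hA i) (hA j) (horth i j (Ne.symm hji))]
      simp
    · intro h; exact absurd (Finset.mem_univ i) h
  rw [matAbs_eq_sqrt]
  exact CFC.sqrt_unique (by rw [← sq]; exact hSsq) hSpsd.nonneg
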